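/- Let T be a tree on n ≥ 4 vertices in which every support vertex is adjacent to exactly one leaf. Then γ^ID(T) ≥ (n + 3)/3. -/

import Mathlib

open Finset

variable {V : Type*}

/-- `D` is an identifying code of `G`: it is dominating, and distinct vertices
have distinct closed neighborhood traces on `D`. -/
def IsIdCode [DecidableEq V] [Fintype V] (G : SimpleGraph V) [DecidableRel G.Adj]
    (D : Finset V) : Prop :=
  (∀ x : V, ((insert x (G.neighborFinset x)) ∩ D).Nonempty) ∧
  ∀ x y : V, x ≠ y →
    (insert x (G.neighborFinset x)) ∩ D ≠ (insert y (G.neighborFinset y)) ∩ D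

/-- The identifying code number `γ^ID(G)`. -/
noncomputable def gammaID [DecidableEq V] [Fintype V] (G : SimpleGraph V)
    [DecidableRel G.Adj] : ℕ :=
  sInf {k | ∃ D : Finset V, IsIdCode G D ∧ D.card = k}


section Helpers
open SimpleGraph

lemma walk_closed (G : SimpleGraph V) {s : Set V} (hs : ∀ a ∈ s, ∀ b, G.Adj a b → b ∈ s)
    {u v : V} (p : G.Walk u v) (hu : u ∈ s) : v ∈ s := by
  induction p with
  | nil => exact hu
  | cons h p ih => exact ih (hs _ hu _ h)

lemma triangle_free (G : SimpleGraph V) (hA : G.IsAcyclic) {x y z : V} (hxy : G.Adj x y)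
    (hyz : G.Adj y z) (hzx : G.Adj z x) : False := by
  refine hA (SimpleGraph.Walk.cons hxy (SimpleGraph.Walk.cons hyz (SimpleGraph.Walk.cons hzx SimpleGraph.Walk.nil))) ?_
  have h1 := hxy.ne
  have h2 := hyz.ne
  have h3 := hzx.ne
  simp [SimpleGraph.Walk.isCycle_def, SimpleGraph.Walk.isTrail_def, Sym2.eq_iff]
  aesop

lemma univ_idcode [DecidableEq V] [Fintype V] (G : SimpleGraph V) [DecidableRel G.Adj]
    (hT : G.IsTree) (hn : 4 ≤ Fintype.card V) :
    (∀ x : V, ((insert x (G.neighborFinset x)) ∩ (univ : Finset V)).Nonempty) ∧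
    ∀ x y : V, x ≠ y →
      (insert x (G.neighborFinset x)) ∩ univ ≠ (insert y (G.neighborFinset y)) ∩ univ := by
  constructor
  · intro x; exact ⟨x, by simp⟩
  · intro x y hxy heq
    simp only [inter_univ] at heq
    -- x adjacent y
    have hyx : y ∈ insert x (G.neighborFinset x) := heq ▸ (mem_insert_self y _)
    have hadj : G.Adj x y := by
      rcases mem_insert.1 hyx with h | h
      · exact absurd h.symm hxy
      · exact (mem_neighborFinset _ _ _).1 h
    -- closed nbhd of x not contained in {x,y}
    have hsub : ¬ (↑(insert x (G.neighborFinset x)) ⊆ ({x, y} : Set V)) := by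
      intro hsub
      have hclosed : ∀ a ∈ ({x, y} : Set V), ∀ b, G.Adj a b → b ∈ ({x, y} : Set V) := by
        rintro a (rfl | rfl) b hab
        · exact hsub (by simp [hab])
        · have : b ∈ insert x (G.neighborFinset x) := heq ▸ (by simp [hab])
          exact hsub this
      -- get z outside {x,y}
      obtain ⟨z, hz⟩ : ∃ z, z ∉ ({x, y} : Finset V) := by
        by_contra h
        push_neg at h
        have hsub2 : (univ : Finset V) ⊆ {x, y} := fun z _ => h z
        have h2 := card_le_card hsub2
        have h3 : ({x, y} : Finset V).card ≤ 2 := card_insert_le _ _ |>.trans (by simp)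
        rw [card_univ] at h2
        omega
      have hzx : z ∈ ({x, y} : Set V) :=
        walk_closed G hclosed ((hT.isConnected x z).some) (by simp)
      simp at hz hzx
      tauto
    -- so there is z in N[x] outside {x,y}
    rw [Set.not_subset] at hsub
    obtain ⟨z, hz1, hz2⟩ := hsub
    simp only [Set.mem_insert_iff, Set.mem_singleton_iff, not_or] at hz2
    obtain ⟨hzx', hzy'⟩ := hz2
    have hz1' : z ∈ insert x (G.neighborFinset x) := by exact_mod_cast hz1
    have hadjxz : G.Adj x z := by
      rcases mem_insert.1 hz1' with h | h
      · exact absurd h hzx'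
      · exact (mem_neighborFinset _ _ _).1 h
    have hadjyz : G.Adj y z := by
      have : z ∈ insert y (G.neighborFinset y) := heq ▸ hz1'
      rcases mem_insert.1 this with h | h
      · exact absurd h hzy'
      · exact (mem_neighborFinset _ _ _).1 h
    exact triangle_free G hT.IsAcyclic hadj hadjyz hadjxz.symm


lemma main_count [DecidableEq V] [Fintype V] (G : SimpleGraph V) [DecidableRel G.Adj]
    (hT : G.IsTree) (hn : 4 ≤ Fintype.card V) (D : Finset V)
    (hdom : ∀ x : V, ((insert x (G.neighborFinset x)) ∩ D).Nonempty)
    (hsep : ∀ x y : V, x ≠ y →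
      (insert x (G.neighborFinset x)) ∩ D ≠ (insert y (G.neighborFinset y)) ∩ D) :
    Fintype.card V + 3 ≤ 3 * D.card := by
  classical
  set t : V → ℕ := fun v => (G.neighborFinset v ∩ D).card with ht_def
  set NI : Finset V := D.filter (fun d => (G.neighborFinset d ∩ D).Nonempty) with hNI_def
  set A : Finset V := Dᶜ.filter (fun x => t x = 1) with hA_def
  -- trace simplification outside D
  have htrace_out : ∀ x ∉ D, (insert x (G.neighborFinset x)) ∩ D = G.neighborFinset x ∩ D :=
    fun x hx => insert_inter_of_notMem hx
  -- F1: double counting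
  have F1 : ∑ v : V, t v = ∑ d ∈ D, G.degree d := by
    have h1 : ∀ v : V, t v = ∑ d ∈ D, if G.Adj v d then 1 else 0 := by
      intro v
      have heq : G.neighborFinset v ∩ D = D.filter (fun d => G.Adj v d) := by
        ext a
        simp [mem_neighborFinset, and_comm]
      show (G.neighborFinset v ∩ D).card = _
      rw [heq, Finset.card_filter]
    calc ∑ v : V, t v = ∑ v : V, ∑ d ∈ D, if G.Adj v d then 1 else 0 := by
          exact Finset.sum_congr rfl (fun v _ => h1 v)
      _ = ∑ d ∈ D, ∑ v : V, if G.Adj v d then 1 else 0 := Finset.sum_comm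
      _ = ∑ d ∈ D, G.degree d := by
          refine Finset.sum_congr rfl (fun d _ => ?_)
          have heq : (univ : Finset V).filter (fun v => G.Adj v d) = G.neighborFinset d := by
            ext a
            simp [mem_neighborFinset, adj_comm]
          rw [← Finset.card_filter, heq, card_neighborFinset_eq_degree]
  -- F2
  have F2 : ∑ x ∈ Dᶜ, t x ≤ ∑ x ∈ Dᶜ, G.degree x := by
    refine Finset.sum_le_sum (fun x _ => ?_)
    rw [← card_neighborFinset_eq_degree]
    exact card_le_card inter_subset_left
  -- F3
  have hedge : G.edgeFinset.card + 1 = Fintype.card V := hT.card_edgeFinset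
  have F3 : ∑ d ∈ D, t d + 2 * ∑ x ∈ Dᶜ, t x ≤ 2 * G.edgeFinset.card := by
    have hs1 : ∑ d ∈ D, t d + ∑ x ∈ Dᶜ, t x = ∑ v : V, t v := D.sum_add_sum_compl t
    have hs2 : ∑ d ∈ D, G.degree d + ∑ x ∈ Dᶜ, G.degree x = ∑ v : V, G.degree v :=
      D.sum_add_sum_compl _
    have hs3 : ∑ v : V, G.degree v = 2 * G.edgeFinset.card :=
      G.sum_degrees_eq_twice_card_edges
    omega
  -- F4
  have F4 : NI.card ≤ ∑ d ∈ D, t d := by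
    calc NI.card = ∑ d ∈ NI, 1 := by simp
      _ ≤ ∑ d ∈ NI, t d := Finset.sum_le_sum (fun d hd => by
          simp only [hNI_def, mem_filter] at hd
          exact Nat.one_le_iff_ne_zero.2 (by simpa [ht_def, Finset.card_eq_zero] using
            hd.2.ne_empty))
      _ ≤ ∑ d ∈ D, t d := Finset.sum_le_sum_of_subset (filter_subset _ _)
  -- F5
  have F5 : ∀ x ∈ Dᶜ, 1 ≤ t x := by
    intro x hx
    rw [mem_compl] at hx
    have := hdom x
    rw [htrace_out x hx] at this
    exact card_pos.2 this
  -- F6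
  have F6 : 2 * Dᶜ.card ≤ ∑ x ∈ Dᶜ, t x + A.card := by
    have hsplit : ∑ x ∈ A, t x + ∑ x ∈ Dᶜ.filter (fun x => ¬ t x = 1), t x = ∑ x ∈ Dᶜ, t x :=
      Finset.sum_filter_add_sum_filter_not _ _ _
    have hcards : A.card + (Dᶜ.filter (fun x => ¬ t x = 1)).card = Dᶜ.card :=
      Finset.card_filter_add_card_filter_not _
    have hA1 : ∑ x ∈ A, t x = A.card := by
      rw [Finset.sum_congr rfl (fun x hx => (mem_filter.1 hx).2)]
      simp [hA_def]
    have hB2 : 2 * (Dᶜ.filter (fun x => ¬ t x = 1)).card ≤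
        ∑ x ∈ Dᶜ.filter (fun x => ¬ t x = 1), t x := by
      calc 2 * (Dᶜ.filter (fun x => ¬ t x = 1)).card
          = ∑ _x ∈ Dᶜ.filter (fun x => ¬ t x = 1), 2 := by
            rw [Finset.sum_const, smul_eq_mul, mul_comm]
        _ ≤ ∑ x ∈ Dᶜ.filter (fun x => ¬ t x = 1), t x := by
            refine Finset.sum_le_sum (fun x hx => ?_)
            rw [mem_filter] at hx
            have := F5 x hx.1
            have h2 := hx.2
            omega
    omega
  -- F7 : A injects into NI
  have F7 : A.card ≤ NI.card := by
    set f : V → V := fun x =>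
      if h : (G.neighborFinset x ∩ D).Nonempty then h.choose else x with hf_def
    have key : ∀ x ∈ A, f x ∈ NI ∧
        (insert x (G.neighborFinset x)) ∩ D = {f x} := by
      intro x hx
      rw [hA_def, mem_filter, mem_compl] at hx
      obtain ⟨hxD, hx1⟩ := hx
      have hx1' : (G.neighborFinset x ∩ D).card = 1 := hx1
      have hne : (G.neighborFinset x ∩ D).Nonempty := card_pos.1 (by omega)
      have hfx : f x = hne.choose := dif_pos hne
      have hmem : f x ∈ G.neighborFinset x ∩ D := hfx ▸ hne.choose_spec
      have htr : (insert x (G.neighborFinset x)) ∩ D = {f x} := by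
        rw [htrace_out x hxD]
        obtain ⟨a, ha⟩ := Finset.card_eq_one.1 hx1
        rw [ha]
        rw [ha, mem_singleton] at hmem
        rw [hmem]
      have hfD : f x ∈ D := (mem_inter.1 hmem).2
      have hxne : x ≠ f x := fun h => hxD (h ▸ hfD)
      refine ⟨?_, htr⟩
      rw [hNI_def, mem_filter]
      refine ⟨hfD, ?_⟩
      by_contra hiso
      rw [Finset.not_nonempty_iff_eq_empty] at hiso
      have htrf : (insert (f x) (G.neighborFinset (f x))) ∩ D = {f x} := by
        rw [Finset.insert_inter_of_mem hfD, hiso, LawfulSingleton.insert_empty_eq]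
      exact hsep x (f x) hxne (htr.trans htrf.symm)
    refine Finset.card_le_card_of_injOn f (fun x hx => (key x hx).1) ?_
    intro x hx y hy hxy
    by_contra hne
    exact hsep x y hne (((key x hx).2.trans (by rw [hxy])).trans ((key y hy).2).symm)
  -- F8 : k ≥ 3
  have F8 : 3 ≤ D.card := by
    have hinj : Fintype.card V ≤ (D.powerset.erase ∅).card := by
      rw [← Finset.card_univ]
      refine Finset.card_le_card_of_injOn
        (fun x => (insert x (G.neighborFinset x)) ∩ D) (fun x _ => ?_) ?_
      · rw [mem_coe, mem_erase]
        exact ⟨(hdom x).ne_empty, Finset.mem_powerset.2 inter_subset_right⟩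
      · intro x _ y _ hxy
        by_contra hne
        exact hsep x y hne hxy
    rw [Finset.card_erase_of_mem (Finset.empty_mem_powerset D), Finset.card_powerset] at hinj
    by_contra hk
    push_neg at hk
    have : (2 : ℕ) ^ D.card ≤ 2 ^ 2 := Nat.pow_le_pow_right (by norm_num) (by omega)
    omega
  -- final arithmetic
  have hNIk : NI.card ≤ D.card := (Finset.card_le_card (filter_subset _ _))
  have hkm : D.card + Dᶜ.card = Fintype.card V := Finset.card_add_card_compl D
  omega

end Helpers

/-- if `T` is a tree on `n ≥ 4` vertices in which every support
vertex is adjacent to exactly one leaf, then `γ^ID(T) ≥ (n + 3)/3`, stated here as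
`3·γ^ID(T) ≥ n + 3`. -/
theorem stmt18 [DecidableEq V] [Fintype V] (G : SimpleGraph V) [DecidableRel G.Adj]
    (hT : G.IsTree) (hn : 4 ≤ Fintype.card V)
    (hsupp : ∀ v : V, (∃ u, G.Adj v u ∧ G.degree u = 1) →
      ((G.neighborFinset v).filter fun u => G.degree u = 1).card = 1) :
    Fintype.card V + 3 ≤ 3 * gammaID G := by
  have huniv : IsIdCode G (univ : Finset V) := univ_idcode G hT hn
  have hne : {k | ∃ D : Finset V, IsIdCode G D ∧ D.card = k}.Nonempty :=
    ⟨(univ : Finset V).card, univ, huniv, rfl⟩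
  obtain ⟨Dc, hDc, hcard⟩ := Nat.sInf_mem hne
  have := main_count G hT hn Dc hDc.1 hDc.2
  rw [gammaID]
  omega
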